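/- For every t ≥ 0 and K ∈ (0,1), t^K = (K/Γ(1-K)) ∫₀^∞ (1 - e^{-t x}) x^{-1-K} dx. -/

import Mathlib

open Real Set MeasureTheory Filter Topology

theorem rpow_eq_gamma_integral (K t : ℝ) (hK : K ∈ Set.Ioo (0:ℝ) 1) (ht : 0 ≤ t) :
    t ^ K = (K / Real.Gamma (1 - K)) *
      ∫ x in Set.Ioi (0:ℝ), (1 - Real.exp (-(t * x))) * x ^ (-1 - K) := by
  obtain ⟨hK0, hK1⟩ := hK
  have hΓ : 0 < Real.Gamma (1 - K) := Real.Gamma_pos_of_pos (by linarith)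
  rcases eq_or_lt_of_le ht with rfl | htpos
  · simp [Real.zero_rpow hK0.ne']
  -- t > 0 case
  set u : ℝ → ℝ := fun x => 1 - Real.exp (-(t * x)) with hu_def
  set u' : ℝ → ℝ := fun x => t * Real.exp (-(t * x)) with hu'_def
  set v : ℝ → ℝ := fun x => -(1/K) * x ^ (-K) with hv_def
  set v' : ℝ → ℝ := fun x => x ^ (-1 - K) with hv'_def
  have hu : ∀ x ∈ Ioi (0:ℝ), HasDerivAt u (u' x) x := by
    intro x _
    have h1 : HasDerivAt (fun x : ℝ => -(t * x)) (-t) x := by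
      have h := ((hasDerivAt_id x).const_mul t).neg
      rw [mul_one] at h
      exact h
    have h2 := h1.exp
    have := h2.const_sub 1
    refine this.congr_deriv ?_
    simp [hu'_def]; ring
  have hv : ∀ x ∈ Ioi (0:ℝ), HasDerivAt v (v' x) x := by
    intro x hx
    have h1 : HasDerivAt (fun x : ℝ => x ^ (-K)) (-K * x ^ (-K - 1)) x :=
      Real.hasDerivAt_rpow_const (Or.inl (ne_of_gt hx))
    have := h1.const_mul (-(1/K))
    refine this.congr_deriv ?_
    have : -K - 1 = -1 - K := by ring
    rw [hv'_def]
    field_simp [this]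
    rw [this]
  have hmeas : AEStronglyMeasurable (fun x => (1 - Real.exp (-(t * x))) * x ^ (-1 - K))
      (volume.restrict (Ioi (0:ℝ))) := by
    refine ContinuousOn.aestronglyMeasurable (fun x hx => ?_) measurableSet_Ioi
    exact (((continuous_const.sub ((continuous_const.mul continuous_id).neg.rexp)).continuousAt).mul
      (Real.continuousAt_rpow_const x _ (Or.inl (ne_of_gt hx)))).continuousWithinAt
  have hbound₁ : ∀ x : ℝ, 0 < x → (1 - Real.exp (-(t * x))) * x ^ (-1 - K) ≤ t * x ^ (-K) := by
    intro x hx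
    have h1 : 1 - Real.exp (-(t * x)) ≤ t * x := by
      nlinarith [Real.add_one_le_exp (-(t * x))]
    have h2 : (0:ℝ) < x ^ (-1 - K) := Real.rpow_pos_of_pos hx _
    calc (1 - Real.exp (-(t * x))) * x ^ (-1 - K) ≤ (t * x) * x ^ (-1 - K) := by
          exact mul_le_mul_of_nonneg_right h1 h2.le
      _ = t * x ^ (-K) := by
          rw [mul_assoc, ← Real.rpow_one_add' hx.le (by intro h; linarith),
            show (1:ℝ) + (-1 - K) = -K by ring]
  have hnn : ∀ x : ℝ, 0 ≤ x → 0 ≤ 1 - Real.exp (-(t * x)) := by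
    intro x hx
    have : Real.exp (-(t * x)) ≤ 1 := Real.exp_le_one_iff.mpr (by nlinarith)
    linarith
  have huv' : IntegrableOn (u * v') (Ioi (0:ℝ)) := by
    have hsplit : Ioc (0:ℝ) 1 ∪ Ioi (1:ℝ) = Ioi 0 := Ioc_union_Ioi_eq_Ioi zero_le_one
    rw [← hsplit]
    apply IntegrableOn.union
    · -- on Ioc 0 1, dominate by t * x ^ (-K)
      have hg : IntegrableOn (fun x : ℝ => t * x ^ (-K)) (Ioc 0 1) := by
        have h0 : IntervalIntegrable (fun x : ℝ => x ^ (-K)) volume 0 1 :=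
          intervalIntegral.intervalIntegrable_rpow' (by linarith)
        have := h0.1
        exact this.const_mul t
      refine Integrable.mono' hg (hmeas.mono_measure
        (Measure.restrict_mono Ioc_subset_Ioi_self le_rfl)) ?_
      filter_upwards [ae_restrict_mem measurableSet_Ioc] with x hx
      have hx0 : 0 < x := hx.1
      show ‖(1 - Real.exp (-(t * x))) * x ^ (-1 - K)‖ ≤ t * x ^ (-K)
      rw [Real.norm_eq_abs, abs_of_nonneg (mul_nonneg (hnn x hx0.le)
        (Real.rpow_pos_of_pos hx0 _).le)]
      exact hbound₁ x hx0
    · -- on Ioi 1, dominate by x ^ (-1 - K)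
      have hg : IntegrableOn (fun x : ℝ => x ^ (-1 - K)) (Ioi 1) :=
        integrableOn_Ioi_rpow_of_lt (by linarith) one_pos
      refine Integrable.mono' hg (hmeas.mono_measure
        (Measure.restrict_mono (Ioi_subset_Ioi zero_le_one) le_rfl)) ?_
      filter_upwards [ae_restrict_mem measurableSet_Ioi] with x hx
      have hx0 : (0:ℝ) < x := lt_trans one_pos hx
      have h2 : (0:ℝ) < x ^ (-1 - K) := Real.rpow_pos_of_pos hx0 _
      show ‖(1 - Real.exp (-(t * x))) * x ^ (-1 - K)‖ ≤ x ^ (-1 - K)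
      rw [Real.norm_eq_abs, abs_of_nonneg (mul_nonneg (hnn x hx0.le) h2.le)]
      nlinarith [hnn x hx0.le, Real.exp_pos (-(t * x))]
  have hexp_int : IntegrableOn (fun x : ℝ => x ^ (-K) * Real.exp (-(t * x))) (Ioi 0) := by
    have := integrableOn_rpow_mul_exp_neg_mul_rpow (s := -K) (p := 1) (b := t)
      (by linarith) one_pos htpos
    simpa [Real.rpow_one] using this
  have hu'v : IntegrableOn (u' * v) (Ioi (0:ℝ)) := by
    have h := hexp_int.const_mul (t * (-(1/K)))
    refine IntegrableOn.congr_fun h (fun x _ => ?_) measurableSet_Ioi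
    simp only [hu'_def, hv_def, Pi.mul_apply]
    ring
  have h_zero : Tendsto (u * v) (nhdsWithin 0 (Ioi 0)) (𝓝 0) := by
    apply squeeze_zero_norm'
    · filter_upwards [self_mem_nhdsWithin] with x (hx : (0:ℝ) < x)
      show ‖u x * v x‖ ≤ (t / K) * x ^ (1 - K)
      have h2 : (0:ℝ) < x ^ (-K) := Real.rpow_pos_of_pos hx _
      rw [norm_mul, Real.norm_eq_abs, Real.norm_eq_abs, abs_of_nonneg (hnn x hx.le),
        hv_def]
      have habs : |(-(1/K) * x ^ (-K))| = (1/K) * x ^ (-K) := by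
        rw [neg_mul, abs_neg, abs_of_nonneg (by positivity)]
      rw [habs]
      have h1 : 1 - Real.exp (-(t * x)) ≤ t * x := by
        nlinarith [Real.add_one_le_exp (-(t * x))]
      calc (1 - Real.exp (-(t * x))) * ((1/K) * x ^ (-K))
          ≤ (t * x) * ((1/K) * x ^ (-K)) := by
            apply mul_le_mul_of_nonneg_right h1 (by positivity)
        _ = (t / K) * (x * x ^ (-K)) := by ring
        _ = (t / K) * x ^ (1 - K) := by
            rw [← Real.rpow_one_add' hx.le (by intro h; linarith),
              show (1:ℝ) + -K = 1 - K by ring]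
    · have h1 : Tendsto (fun x : ℝ => x ^ (1 - K)) (nhdsWithin 0 (Ioi 0)) (𝓝 0) := by
        have := (Real.continuousAt_rpow_const 0 (1 - K) (Or.inr (by linarith))).tendsto
        rw [Real.zero_rpow (by intro h; linarith : (1:ℝ) - K ≠ 0)] at this
        exact this.mono_left nhdsWithin_le_nhds
      simpa using h1.const_mul (t / K)
  have h_infty : Tendsto (u * v) atTop (𝓝 0) := by
    have h1 : Tendsto u atTop (𝓝 1) := by
      have he : Tendsto (fun x : ℝ => Real.exp (-(t * x))) atTop (𝓝 0) := by
        apply Real.tendsto_exp_atBot.comp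
        exact tendsto_neg_atTop_atBot.comp (tendsto_id.const_mul_atTop htpos)
      simpa using he.const_sub 1
    have h2 : Tendsto v atTop (𝓝 (-(1/K) * 0)) :=
      (tendsto_rpow_neg_atTop hK0).const_mul _
    rw [mul_zero] at h2
    have := h1.mul h2
    rw [mul_zero] at this
    exact this
  have hparts := integral_Ioi_mul_deriv_eq_deriv_mul hu hv huv' hu'v h_zero h_infty
  have hval : ∫ x in Ioi (0:ℝ), u' x * v x = -(t/K) * ((1/t) ^ (1-K) * Real.Gamma (1-K)) := by
    have hgamma := Real.integral_rpow_mul_exp_neg_mul_Ioi (a := 1 - K) (r := t)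
      (by linarith) htpos
    have : ∫ x in Ioi (0:ℝ), u' x * v x
        = ∫ x in Ioi (0:ℝ), (t * (-(1/K))) * (x ^ ((1-K) - 1) * Real.exp (-(t * x))) := by
      refine setIntegral_congr_fun measurableSet_Ioi (fun x _ => ?_)
      have : (1:ℝ) - K - 1 = -K := by ring
      rw [this]
      simp only [hu'_def, hv_def]
      ring
    rw [this, integral_const_mul, hgamma]
    ring
  have hI : ∫ x in Ioi (0:ℝ), (1 - Real.exp (-(t * x))) * x ^ (-1 - K)
      = Real.Gamma (1 - K) * t ^ K / K := by
    have : ∫ x in Ioi (0:ℝ), (1 - Real.exp (-(t * x))) * x ^ (-1 - K)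
        = ∫ x in Ioi (0:ℝ), u x * v' x := rfl
    rw [this, hparts, hval]
    have ht' : (1/t) ^ (1-K) = t ^ (K - 1) := by
      rw [one_div, Real.inv_rpow htpos.le, ← Real.rpow_neg htpos.le,
        show -(1-K) = K - 1 by ring]
    rw [ht']
    have : t * t ^ (K - 1) = t ^ K := by
      rw [← Real.rpow_one_add' htpos.le (by intro h; linarith),
        show (1:ℝ) + (K - 1) = K by ring]
    field_simp
    nlinarith [this]
  rw [hI]
  field_simp
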